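/- Fix n ≥ 1 and positive reals c₀, C̄, and for each i ∈ {1,…,n} positive reals ξᵢ, γᵢ, hᵢ, and σ̃ > 0. Let D = {(κ, z) ∈ ℝⁿ × ℝⁿ : κᵢ ≥ 0, zᵢ ≥ 0 for all i, and c₀·∑ᵢ κᵢ + ∑ᵢ ξᵢ zᵢ ≤ C̄}, and let G(κ, z) = ∑_{i=1}^n κᵢ zᵢ γᵢ² hᵢ² / (zᵢ hᵢ² + κᵢ σ̃²), with the convention that a term equals 0 when κᵢ = zᵢ = 0. Define ρᵢ = γᵢ² hᵢ² / (σ̃·√ξᵢ + hᵢ·√c₀)². Then the supremum of G over D equals C̄ · maxᵢ ρᵢ, and it is attained at the single-user allocation in which, for an index j achieving maxᵢ ρᵢ, κⱼ = hⱼ C̄ / (σ̃·√(ξⱼ c₀) + hⱼ c₀), zⱼ = σ̃ C̄ / (σ̃ ξⱼ + hⱼ √(ξⱼ c₀)), and κᵢ = zᵢ = 0 for all i ≠ j. -/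

import Mathlib

open Finset

/-- Sensing deflection `G(κ, z) = ∑ᵢ κᵢ zᵢ γᵢ² hᵢ² / (zᵢ hᵢ² + κᵢ σ̃²)`,
with the convention that a term equals `0` when `κᵢ = zᵢ = 0`. -/
noncomputable def deflection (n : ℕ) (σ : ℝ) (γ h : Fin n → ℝ)
    (κ z : Fin n → ℝ) : ℝ :=
  ∑ i, if κ i = 0 ∧ z i = 0 then 0
    else κ i * z i * (γ i) ^ 2 * (h i) ^ 2 / (z i * (h i) ^ 2 + κ i * σ ^ 2)

lemma term_le_key (c₀ σ ξ γ h κ z : ℝ) (hc₀ : 0 < c₀) (hσ : 0 < σ) (hξ : 0 < ξ)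
    (hh : 0 < h) (hκ : 0 ≤ κ) (hz : 0 ≤ z) :
    (if κ = 0 ∧ z = 0 then (0:ℝ) else κ * z * γ^2 * h^2 / (z * h^2 + κ * σ^2))
    ≤ γ^2 * h^2 / (σ * Real.sqrt ξ + h * Real.sqrt c₀)^2 * (c₀ * κ + ξ * z) := by
  by_cases hb : κ = 0 ∧ z = 0
  · simp [hb.1, hb.2]
  · rw [if_neg hb]
    set a := Real.sqrt ξ with ha_def
    set b := Real.sqrt c₀ with hb_def
    have ha : 0 < a := Real.sqrt_pos.mpr hξ
    have hb' : 0 < b := Real.sqrt_pos.mpr hc₀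
    have ha2 : a^2 = ξ := Real.sq_sqrt hξ.le
    have hb2 : b^2 = c₀ := Real.sq_sqrt hc₀.le
    have hden : 0 < z * h^2 + κ * σ^2 := by
      rcases not_and_or.mp hb with hk | hz0
      · have hk' : 0 < κ := lt_of_le_of_ne hκ (Ne.symm hk)
        have : 0 < κ * σ^2 := by positivity
        nlinarith [mul_nonneg hz (sq_nonneg h)]
      · have hz' : 0 < z := lt_of_le_of_ne hz (Ne.symm hz0)
        have : 0 < z * h^2 := by positivity
        nlinarith [mul_nonneg hκ (sq_nonneg σ)]
    have hD : 0 < (σ * a + h * b)^2 := by positivity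
    have key : κ * z * (σ * a + h * b)^2 ≤ (c₀ * κ + ξ * z) * (z * h^2 + κ * σ^2) := by
      rw [← ha2, ← hb2]
      nlinarith [sq_nonneg (σ * b * κ - h * a * z), mul_nonneg hκ hz]
    rw [div_le_iff₀ hden]
    have heq : γ^2 * h^2 / (σ * a + h * b)^2 * (c₀ * κ + ξ * z) * (z * h^2 + κ * σ^2)
        = γ^2 * h^2 * ((c₀ * κ + ξ * z) * (z * h^2 + κ * σ^2)) / (σ * a + h * b)^2 := by
      ring
    rw [heq, le_div_iff₀ hD]
    nlinarith [mul_le_mul_of_nonneg_left key (by positivity : (0:ℝ) ≤ γ^2 * h^2)]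

/-- Theorem 1: with `ρᵢ = γᵢ² hᵢ² / (σ̃√ξᵢ + hᵢ√c₀)²`, the
supremum of the deflection over the cost-constrained feasible set equals
`C̄ · maxᵢ ρᵢ`, and it is attained at the single-user allocation in which only
a user `j` achieving `maxᵢ ρᵢ` is active, with
`κⱼ = hⱼ C̄ / (σ̃√(ξⱼc₀) + hⱼc₀)` and `zⱼ = σ̃ C̄ / (σ̃ξⱼ + hⱼ√(ξⱼc₀))`. -/
theorem stmt_3 (n : ℕ) (hn : 1 ≤ n) (c₀ C σ : ℝ) (ξ γ h : Fin n → ℝ)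
    (hc₀ : 0 < c₀) (hC : 0 < C) (hσ : 0 < σ)
    (hξ : ∀ i, 0 < ξ i) (hγ : ∀ i, 0 < γ i) (hh : ∀ i, 0 < h i)
    (ρ : Fin n → ℝ)
    (hρ : ∀ i, ρ i = (γ i) ^ 2 * (h i) ^ 2 /
      (σ * Real.sqrt (ξ i) + h i * Real.sqrt c₀) ^ 2)
    (j : Fin n) (hj : ∀ i, ρ i ≤ ρ j)
    (κopt zopt : Fin n → ℝ)
    (hκopt : κopt = fun i =>
      if i = j then h j * C / (σ * Real.sqrt (ξ j * c₀) + h j * c₀) else 0)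
    (hzopt : zopt = fun i =>
      if i = j then σ * C / (σ * ξ j + h j * Real.sqrt (ξ j * c₀)) else 0) :
    ((∀ i, 0 ≤ κopt i) ∧ (∀ i, 0 ≤ zopt i) ∧
      c₀ * ∑ i, κopt i + ∑ i, ξ i * zopt i ≤ C) ∧
    deflection n σ γ h κopt zopt = C * ρ j ∧
    (∀ κ z : Fin n → ℝ, (∀ i, 0 ≤ κ i) → (∀ i, 0 ≤ z i) →
      c₀ * ∑ i, κ i + ∑ i, ξ i * z i ≤ C →
      deflection n σ γ h κ z ≤ C * ρ j) := by
  have hhj : 0 < h j := hh j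
  have hξj : 0 < ξ j := hξ j
  have hγj : 0 < γ j := hγ j
  have ha : 0 < Real.sqrt (ξ j) := Real.sqrt_pos.mpr (hξ j)
  have hb : 0 < Real.sqrt c₀ := Real.sqrt_pos.mpr hc₀
  set a := Real.sqrt (ξ j) with ha_def
  set b := Real.sqrt c₀ with hb_def
  have ha2 : a^2 = ξ j := Real.sq_sqrt (hξ j).le
  have hb2 : b^2 = c₀ := Real.sq_sqrt hc₀.le
  have hsab : Real.sqrt (ξ j * c₀) = a * b := Real.sqrt_mul (hξ j).le c₀
  have hd1 : 0 < σ * Real.sqrt (ξ j * c₀) + h j * c₀ := by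
    rw [hsab]; positivity
  have hd2 : 0 < σ * ξ j + h j * Real.sqrt (ξ j * c₀) := by
    rw [hsab]; positivity
  set K := h j * C / (σ * Real.sqrt (ξ j * c₀) + h j * c₀) with hK_def
  set Z := σ * C / (σ * ξ j + h j * Real.sqrt (ξ j * c₀)) with hZ_def
  have hKpos : 0 < K := by
    apply div_pos (by positivity) hd1
  have hZpos : 0 < Z := by
    apply div_pos (by positivity) hd2
  have hcosteq : c₀ * K + ξ j * Z = C := by
    rw [hK_def, hZ_def, hsab, ← ha2, ← hb2]
    have h1 : σ * (a * b) + h j * b^2 ≠ 0 := by positivity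
    have h2 : σ * a^2 + h j * (a * b) ≠ 0 := by positivity
    field_simp
    ring
  have hsumκ : ∑ i, κopt i = K := by
    rw [hκopt]; simp
  have hsumz : ∑ i, ξ i * zopt i = ξ j * Z := by
    rw [hzopt]; simp [mul_ite, mul_zero]
  have hρj_nonneg : 0 ≤ ρ j := by rw [hρ j]; positivity
  refine ⟨⟨?_, ?_, ?_⟩, ?_, ?_⟩
  · intro i; rw [hκopt]; dsimp only
    split
    · exact hKpos.le
    · exact le_refl 0
  · intro i; rw [hzopt]; dsimp only
    split
    · exact hZpos.le
    · exact le_refl 0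
  · rw [hsumκ, hsumz, hcosteq]
  · -- value at the optimum
    rw [deflection, Finset.sum_eq_single j]
    · rw [hκopt, hzopt]; dsimp only
      simp only [if_pos (rfl : j = j), ↓reduceIte]
      rw [if_neg (by push_neg; intro hK0; exact absurd hK0 hKpos.ne')]
      rw [hρ j, hK_def, hZ_def, hsab, ← ha_def, ← ha2, ← hb2]
      have h1 : σ * (a * b) + h j * b^2 ≠ 0 := by positivity
      have h2 : σ * a^2 + h j * (a * b) ≠ 0 := by positivity
      have hden : σ * C / (σ * a ^ 2 + h j * (a * b)) * h j ^ 2 +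
          h j * C / (σ * (a * b) + h j * b ^ 2) * σ ^ 2 ≠ 0 := by
        have e1 : 0 < σ * C / (σ * a ^ 2 + h j * (a * b)) * h j ^ 2 := by positivity
        have e2 : 0 < h j * C / (σ * (a * b) + h j * b ^ 2) * σ ^ 2 := by positivity
        positivity
      have hD : (σ * a + h j * b) ≠ 0 := by positivity
      field_simp
      ring
    · intro i _ hij
      rw [hκopt, hzopt]; dsimp only
      simp only [if_neg hij]
      rw [if_pos ⟨trivial, trivial⟩]
    · intro hj'; exact absurd (Finset.mem_univ j) hj'
  · intro κ z hκ hz hcost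
    calc deflection n σ γ h κ z
        ≤ ∑ i, ρ i * (c₀ * κ i + ξ i * z i) := by
          apply Finset.sum_le_sum
          intro i _
          rw [hρ i]
          exact term_le_key c₀ σ (ξ i) (γ i) (h i) (κ i) (z i) hc₀ hσ (hξ i)
            (hh i) (hκ i) (hz i)
      _ ≤ ∑ i, ρ j * (c₀ * κ i + ξ i * z i) := by
          apply Finset.sum_le_sum
          intro i _
          exact mul_le_mul_of_nonneg_right (hj i)
            (add_nonneg (mul_nonneg hc₀.le (hκ i)) (mul_nonneg (hξ i).le (hz i)))
      _ = ρ j * (c₀ * ∑ i, κ i + ∑ i, ξ i * z i) := by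
          rw [← Finset.mul_sum, Finset.sum_add_distrib, ← Finset.mul_sum]
      _ ≤ ρ j * C := mul_le_mul_of_nonneg_left hcost hρj_nonneg
      _ = C * ρ j := mul_comm _ _
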